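/- Let W be a real k×r matrix. Then det(ZᵀW) ≠ 0 if and only if there exist X ∈ ℝ^{(k−r)×r} and an invertible G ∈ ℝ^{r×r} such that W = (Z + Z_⊥X)·G. Moreover, in that case the pair (X, G) is unique and is given explicitly by G = Z⁺W and X = Z_⊥⁺W·(Z⁺W)⁻¹; that is, the chart ξ_Z : 𝒱_Z → ℝ^{(k−r)×r} × GL_r with ξ_Z⁻¹(X,G) = (Z + Z_⊥X)G is a bijection, where 𝒱_Z := {W ∈ ℝ^{k×r} : det(ZᵀW) ≠ 0}. -/

import Mathlib

open Matrix

lemma isUnit_of_rank_eq {r : ℕ} (A : Matrix (Fin r) (Fin r) ℝ) (h : A.rank = r) :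
    IsUnit A := by
  rw [← Matrix.mulVec_surjective_iff_isUnit]
  have hrange : LinearMap.range A.mulVecLin = ⊤ := by
    apply Submodule.eq_top_of_finrank_eq
    rw [← Matrix.rank, h]
    simp [Module.finrank_fintype_fun_eq_card]
  intro y
  obtain ⟨x, hx⟩ := LinearMap.range_eq_top.mp hrange y
  exact ⟨x, hx⟩

/-- `det (Zᵀ W) ≠ 0` iff `W = (Z + Z_⊥ X) G` for some `X` and invertible `G`,
and in that case the pair `(X, G)` is unique, given by `G = Z⁺ W`, `X = Z_⊥⁺ W (Z⁺ W)⁻¹`. -/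
theorem stmt11 (k r : ℕ) (hr : 0 < r) (hrk : r < k)
    (Z : Matrix (Fin k) (Fin r) ℝ) (hZ : Z.rank = r)
    (Zperp : Matrix (Fin k) (Fin (k - r)) ℝ) (hZperp : Zperp.rank = k - r)
    (horth : Zᵀ * Zperp = 0)
    (W : Matrix (Fin k) (Fin r) ℝ) :
    ((Zᵀ * W).det ≠ 0 ↔
      ∃ (X : Matrix (Fin (k - r)) (Fin r) ℝ) (G : Matrix (Fin r) (Fin r) ℝ),
        IsUnit G ∧ W = (Z + Zperp * X) * G) ∧
    (∀ (X : Matrix (Fin (k - r)) (Fin r) ℝ) (G : Matrix (Fin r) (Fin r) ℝ),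
      IsUnit G → W = (Z + Zperp * X) * G →
        G = (Zᵀ * Z)⁻¹ * Zᵀ * W ∧
        X = (Zperpᵀ * Zperp)⁻¹ * Zperpᵀ * W * ((Zᵀ * Z)⁻¹ * Zᵀ * W)⁻¹) := by
  -- invertibility of the Gram matrices
  have hZZ : IsUnit (Zᵀ * Z) :=
    isUnit_of_rank_eq _ (by rw [Matrix.rank_transpose_mul_self, hZ])
  have hPP : IsUnit (Zperpᵀ * Zperp) :=
    isUnit_of_rank_eq _ (by rw [Matrix.rank_transpose_mul_self, hZperp])
  have hZZd : IsUnit (Zᵀ * Z).det := (Matrix.isUnit_iff_isUnit_det _).mp hZZ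
  have hPPd : IsUnit (Zperpᵀ * Zperp).det := (Matrix.isUnit_iff_isUnit_det _).mp hPP
  have horth' : Zperpᵀ * Z = 0 := by
    have := congrArg Matrix.transpose horth
    simpa [Matrix.transpose_mul] using this
  set C : Matrix (Fin r) (Fin k) ℝ := (Zᵀ * Z)⁻¹ * Zᵀ with hC
  set D : Matrix (Fin (k - r)) (Fin k) ℝ := (Zperpᵀ * Zperp)⁻¹ * Zperpᵀ with hD
  have hCZ : C * Z = 1 := by
    rw [hC, Matrix.mul_assoc, Matrix.nonsing_inv_mul _ hZZd]
  have hCZp : C * Zperp = 0 := by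
    rw [hC, Matrix.mul_assoc, horth, Matrix.mul_zero]
  have hDZ : D * Z = 0 := by
    rw [hD, Matrix.mul_assoc, horth', Matrix.mul_zero]
  have hDZp : D * Zperp = 1 := by
    rw [hD, Matrix.mul_assoc, Matrix.nonsing_inv_mul _ hPPd]
  -- key identity : Z * C + Zperp * D = 1
  have e : Fin k ≃ Fin r ⊕ Fin (k - r) :=
    (finCongr (by omega)).trans finSumFinEquiv.symm
  have key : Z * C + Zperp * D = 1 := by
    have h1 : fromRows C D * fromCols Z Zperp = 1 := by
      rw [fromRows_mul_fromCols, hCZ, hCZp, hDZ, hDZp]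
      exact Matrix.fromBlocks_one
    have h2 : fromCols Z Zperp * fromRows C D = 1 :=
      (Matrix.fromCols_mul_fromRows_eq_one_comm e Z Zperp C D).mpr h1
    rwa [fromCols_mul_fromRows] at h2
  constructor
  · constructor
    · intro hdet
      have hGu : IsUnit (C * W) := by
        have hcw : C * W = (Zᵀ * Z)⁻¹ * (Zᵀ * W) := by rw [hC, Matrix.mul_assoc]
        rw [hcw]
        exact ((Matrix.isUnit_iff_isUnit_det _).mpr
            (by rw [Matrix.det_nonsing_inv]; rw [← hZZd.unit_spec, Ring.inverse_unit]; exact Units.isUnit _)).mul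
          ((Matrix.isUnit_iff_isUnit_det _).mpr (isUnit_iff_ne_zero.mpr hdet))
      have hGd : IsUnit (C * W).det := (Matrix.isUnit_iff_isUnit_det _).mp hGu
      have hinv : (C * W)⁻¹ * (C * W) = 1 := Matrix.nonsing_inv_mul _ hGd
      refine ⟨D * W * (C * W)⁻¹, C * W, hGu, ?_⟩
      calc W = (Z * C + Zperp * D) * W := by rw [key, Matrix.one_mul]
        _ = Z * (C * W) + Zperp * (D * W) := by
            rw [Matrix.add_mul, Matrix.mul_assoc Z C W, Matrix.mul_assoc Zperp D W]
        _ = Z * (C * W) + Zperp * (D * W * ((C * W)⁻¹ * (C * W))) := by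
            rw [hinv, Matrix.mul_one]
        _ = Z * (C * W) + Zperp * (D * W * (C * W)⁻¹ * (C * W)) := by
            rw [← Matrix.mul_assoc (D * W)]
        _ = (Z + Zperp * (D * W * (C * W)⁻¹)) * (C * W) := by
            rw [← Matrix.mul_assoc Zperp, Matrix.add_mul]
    · rintro ⟨X, G, hG, rfl⟩
      have h1 : Zᵀ * ((Z + Zperp * X) * G) = (Zᵀ * Z) * G := by
        rw [← Matrix.mul_assoc, Matrix.mul_add, ← Matrix.mul_assoc, horth,
          Matrix.zero_mul, add_zero]
      rw [h1, Matrix.det_mul]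
      exact mul_ne_zero hZZd.ne_zero
        (isUnit_iff_ne_zero.mp ((Matrix.isUnit_iff_isUnit_det _).mp hG))
  · intro X G hG hW
    have hGd : IsUnit G.det := (Matrix.isUnit_iff_isUnit_det _).mp hG
    have hGeq : C * W = G := by
      rw [hW, ← Matrix.mul_assoc, Matrix.mul_add, ← Matrix.mul_assoc, hCZ, hCZp,
        Matrix.zero_mul, add_zero, Matrix.one_mul]
    have hXG : D * W = X * G := by
      rw [hW, ← Matrix.mul_assoc, Matrix.mul_add, ← Matrix.mul_assoc, hDZ, hDZp,
        Matrix.one_mul, zero_add]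
    have hX : X = D * W * G⁻¹ := by
      rw [hXG, Matrix.mul_assoc, Matrix.mul_nonsing_inv _ hGd, Matrix.mul_one]
    refine ⟨hGeq.symm, ?_⟩
    rw [hGeq]
    exact hX
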